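/- arXiv:2503.02370 — 2 statements merged into one kernel-verified Lean document; each statement's English description precedes it below -/
import Mathlib

section
/- Suppose M > L_g‖L_p‖, μ > M + L_g‖L_p‖, δ ≥ 0, and (x_k)_{k≥0} is a RHOTA sequence such that for each k the inexact optimality condition holds and y_{k+1} is a global minimizer over C of y ↦ f(y) + (μ/(p+1)!)‖y − x_k‖^{p+1}. Then for every k ≥ 0 there exists j ∈ {0, …, k} such that ‖y_{j+1} − x_j‖^{p+1} ≤ L_μ (f(x_0) − f^*)(p+1)!/((M − L_g‖L_p‖)(k+1)); equivalently, the optimality residual satisfies ((μ/p!)‖y_{j+1} − x_j‖^{p})^{(p+1)/p} ≤ L_μ (μ/p!)^{(p+1)/p} (f(x_0) − f^*)(p+1)!/((M − L_g‖L_p‖)(k+1)). -/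
open scoped BigOperators RealInnerProductSpace

noncomputable section

/-- The vector `(F_1(x), …, F_m(x)) ∈ ℝ^m` (with the Euclidean norm). -/
def euclMap {n m : ℕ} (F : Fin m → EuclideanSpace ℝ (Fin n) → ℝ)
    (x : EuclideanSpace ℝ (Fin n)) : EuclideanSpace ℝ (Fin m) :=
  (EuclideanSpace.equiv (Fin m) ℝ).symm fun i => F i x

/-- The vector `T_p^F(y; x)` of `p`-th order Taylor approximations of the components
`F_i` around the center `x`, evaluated at `y`. -/
def taylorMap (p : ℕ) {n m : ℕ} (F : Fin m → EuclideanSpace ℝ (Fin n) → ℝ)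
    (y x : EuclideanSpace ℝ (Fin n)) : EuclideanSpace ℝ (Fin m) :=
  (EuclideanSpace.equiv (Fin m) ℝ).symm fun i =>
    ∑ j ∈ Finset.range (p + 1),
      (1 / (Nat.factorial j : ℝ)) * iteratedFDeriv ℝ j (F i) x (fun _ => y - x)

/-- The composite objective `f(x) = g(F(x)) + h(x)`. -/
def fObj {n m : ℕ} (F : Fin m → EuclideanSpace ℝ (Fin n) → ℝ)
    (g : EuclideanSpace ℝ (Fin m) → ℝ) (h : EuclideanSpace ℝ (Fin n) → ℝ)
    (x : EuclideanSpace ℝ (Fin n)) : ℝ :=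
  g (euclMap F x) + h x

/-- The regularized higher-order Taylor model
`s_M(y; x̄) = g(T_p^F(y; x̄)) + (M/(p+1)!)‖y − x̄‖^{p+1} + h(y)`. -/
def sModel (p : ℕ) {n m : ℕ} (F : Fin m → EuclideanSpace ℝ (Fin n) → ℝ)
    (g : EuclideanSpace ℝ (Fin m) → ℝ) (h : EuclideanSpace ℝ (Fin n) → ℝ) (M : ℝ)
    (y xb : EuclideanSpace ℝ (Fin n)) : ℝ :=
  g (taylorMap p F y xb) + M / (Nat.factorial (p + 1) : ℝ) * ‖y - xb‖ ^ (p + 1) + h y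

open Finset
variable {E : Type*} [NormedAddCommGroup E] [NormedSpace ℝ E]

-- derivative of phi_j
lemma phi_hasDeriv (p : ℕ) (F : E → ℝ) (hF : ContDiff ℝ (p : ℕ∞) F)
    (x v : E) (j : ℕ) (hj : j < p) (t : ℝ) :
    HasDerivAt (fun s : ℝ => iteratedFDeriv ℝ j F (x + s • v) (fun _ => v))
      (iteratedFDeriv ℝ (j + 1) F (x + t • v) (fun _ => v)) t := by
  have hdiff : Differentiable ℝ (iteratedFDeriv ℝ j F) :=
    hF.differentiable_iteratedFDeriv (by exact_mod_cast hj)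
  have hc : HasDerivAt (fun s : ℝ => x + s • v) v t := by
    simpa using ((hasDerivAt_id t).smul_const v).const_add x
  have hG : HasFDerivAt (iteratedFDeriv ℝ j F)
      (fderiv ℝ (iteratedFDeriv ℝ j F) (x + t • v)) (x + t • v) :=
    (hdiff (x + t • v)).hasFDerivAt
  have h1 := (hG.continuousMultilinear_apply_const (fun _ : Fin j => v)).comp_hasDerivAt t hc
  exact h1

lemma taylor_lip_bound (p : ℕ) (hp : 1 ≤ p) (F : E → ℝ) (hF : ContDiff ℝ (p : ℕ∞) F)
    (L : ℝ) (hL : ∀ a b : E, ‖iteratedFDeriv ℝ p F a - iteratedFDeriv ℝ p F b‖ ≤ L * ‖a - b‖)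
    (x y : E) :
    |F y - ∑ j ∈ Finset.range (p + 1),
        (1 / (Nat.factorial j : ℝ)) * iteratedFDeriv ℝ j F x (fun _ => y - x)| ≤
      L / (Nat.factorial (p + 1) : ℝ) * ‖y - x‖ ^ (p + 1) := by
  obtain ⟨q, rfl⟩ : ∃ q, p = q + 1 := ⟨p - 1, (Nat.succ_pred_eq_of_pos hp).symm⟩
  set p := q + 1 with hpdef
  set v := y - x with hv
  set Φ : ℕ → ℝ → ℝ := fun j t => iteratedFDeriv ℝ j F (x + t • v) (fun _ => v) with hΦ
  have hΦd : ∀ j < p, ∀ t : ℝ, HasDerivAt (Φ j) (Φ (j + 1) t) t := fun j hj t =>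
    phi_hasDeriv p F hF x v j hj t
  set K : ℝ := Φ p 0 with hK
  -- χ and its derivative
  set χ : ℝ → ℝ := fun t =>
    (∑ j ∈ Finset.range p, ((1 - t) ^ j / (Nat.factorial j : ℝ)) * Φ j t) -
      (1 - (1 - t) ^ p) / (Nat.factorial p : ℝ) * K with hχ
  have hχd : ∀ t : ℝ, HasDerivAt χ
      ((1 - t) ^ q / (Nat.factorial q : ℝ) * (Φ p t - K)) t := by
    intro t
    have hone : HasDerivAt (fun s : ℝ => 1 - s) (-1) t := by
      exact (hasDerivAt_id t).const_sub 1
    have hpow : ∀ j : ℕ, HasDerivAt (fun s : ℝ => (1 - s) ^ j)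
        ((j : ℝ) * (1 - t) ^ (j - 1) * (-1)) t := fun j =>
      (hasDerivAt_pow j (1 - t)).comp t hone
    -- each summand
    have hterm : ∀ j ∈ Finset.range p, HasDerivAt
        (fun s => ((1 - s) ^ j / (Nat.factorial j : ℝ)) * Φ j s)
        (((j : ℝ) * (1 - t) ^ (j - 1) * (-1) / (Nat.factorial j : ℝ)) * Φ j t +
          ((1 - t) ^ j / (Nat.factorial j : ℝ)) * Φ (j + 1) t) t := by
      intro j hj
      have := ((hpow j).div_const (Nat.factorial j : ℝ)).mul
        (hΦd j (Finset.mem_range.1 hj) t)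
      exact this
    have hsum := HasDerivAt.sum hterm
    have hlast : HasDerivAt (fun s => (1 - (1 - s) ^ p) / (Nat.factorial p : ℝ) * K)
        (((p : ℝ) * (1 - t) ^ (p - 1) / (Nat.factorial p : ℝ)) * K) t := by
      have := (((hasDerivAt_const t (1:ℝ)).sub (hpow p)).div_const
        (Nat.factorial p : ℝ)).mul_const K
      refine this.congr_deriv ?_
      ring
    have := hsum.sub hlast
    refine HasDerivAt.congr_of_eventuallyEq (this.congr_deriv ?_)
      (Filter.Eventually.of_forall fun s => by simp [hχ, Finset.sum_apply])
    -- telescoping identity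
    set W : ℕ → ℝ := fun j => Nat.rec 0
      (fun k _ => (1 - t) ^ k / (Nat.factorial k : ℝ) * Φ (k + 1) t) j with hW
    have htel : ∀ j ∈ Finset.range p,
        ((j : ℝ) * (1 - t) ^ (j - 1) * (-1) / (Nat.factorial j : ℝ)) * Φ j t +
          ((1 - t) ^ j / (Nat.factorial j : ℝ)) * Φ (j + 1) t = W (j + 1) - W j := by
      intro j _
      cases j with
      | zero => simp [hW]
      | succ k =>
        show _ = (1 - t) ^ (k+1) / (Nat.factorial (k+1) : ℝ) * Φ (k + 2) t -
          (1 - t) ^ k / (Nat.factorial k : ℝ) * Φ (k + 1) t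
        have hfac : (Nat.factorial (k+1) : ℝ) = (k + 1) * (Nat.factorial k : ℝ) := by
          push_cast [Nat.factorial_succ]; ring
        have hne : (Nat.factorial k : ℝ) ≠ 0 := by positivity
        simp only [Nat.add_sub_cancel, Nat.cast_add, Nat.cast_one]
        rw [hfac]
        field_simp
        ring
    rw [Finset.sum_congr rfl htel, Finset.sum_range_sub]
    have : W p = (1 - t) ^ q / (Nat.factorial q : ℝ) * Φ p t := rfl
    rw [this]
    simp only [hW, hpdef]
    have hfac : (Nat.factorial (q+1) : ℝ) = (q + 1) * (Nat.factorial q : ℝ) := by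
      push_cast [Nat.factorial_succ]; ring
    rw [hfac]
    have hne : (Nat.factorial q : ℝ) ≠ 0 := by positivity
    simp only [Nat.rec_zero, Nat.add_sub_cancel, Nat.cast_add, Nat.cast_one]
    field_simp
    ring
  -- bound on the derivative of χ on [0,1]
  have hbound : ∀ t ∈ Set.Icc (0:ℝ) 1,
      |(1 - t) ^ q / (Nat.factorial q : ℝ) * (Φ p t - K)| ≤
        L * ‖v‖ ^ (p + 1) / (Nat.factorial q : ℝ) * (t * (1 - t) ^ q) := by
    intro t ht
    obtain ⟨ht0, ht1⟩ := ht
    have h1 : |Φ p t - K| ≤ L * t * ‖v‖ ^ (p + 1) := by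
      have heq : Φ p t - K =
          (iteratedFDeriv ℝ p F (x + t • v) - iteratedFDeriv ℝ p F (x + (0:ℝ) • v))
            (fun _ => v) := by
        simp [hΦ, hK, ContinuousMultilinearMap.sub_apply]
      rw [heq]
      have h2 := (iteratedFDeriv ℝ p F (x + t • v) -
        iteratedFDeriv ℝ p F (x + (0:ℝ) • v)).le_opNorm (fun _ : Fin p => v)
      have h3 := hL (x + t • v) (x + (0:ℝ) • v)
      have h4 : ‖x + t • v - (x + (0:ℝ) • v)‖ = t * ‖v‖ := by
        rw [show x + t • v - (x + (0:ℝ) • v) = t • v by abel_nf; module]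
        rw [norm_smul]
        simp [abs_of_nonneg ht0]
      have h5 : (∏ _i : Fin p, ‖v‖) = ‖v‖ ^ p := by
        simp [Finset.prod_const]
      rw [h4] at h3
      rw [h5] at h2
      calc |(iteratedFDeriv ℝ p F (x + t • v) - iteratedFDeriv ℝ p F (x + (0:ℝ) • v))
            (fun _ => v)| ≤ ‖iteratedFDeriv ℝ p F (x + t • v) -
              iteratedFDeriv ℝ p F (x + (0:ℝ) • v)‖ * ‖v‖ ^ p := h2
        _ ≤ (L * (t * ‖v‖)) * ‖v‖ ^ p := by
            apply mul_le_mul_of_nonneg_right h3 (by positivity)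
        _ = L * t * ‖v‖ ^ (p + 1) := by ring
    rw [abs_mul]
    have hq : |(1 - t) ^ q / (Nat.factorial q : ℝ)| = (1 - t) ^ q / (Nat.factorial q : ℝ) := by
      apply abs_of_nonneg
      have : (0:ℝ) ≤ 1 - t := by linarith
      positivity
    rw [hq]
    have hqn : (0:ℝ) ≤ (1 - t) ^ q / (Nat.factorial q : ℝ) := by
      have : (0:ℝ) ≤ 1 - t := by linarith
      positivity
    calc (1 - t) ^ q / (Nat.factorial q : ℝ) * |Φ p t - K|
        ≤ (1 - t) ^ q / (Nat.factorial q : ℝ) * (L * t * ‖v‖ ^ (p + 1)) :=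
          mul_le_mul_of_nonneg_left h1 hqn
      _ = L * ‖v‖ ^ (p + 1) / (Nat.factorial q : ℝ) * (t * (1 - t) ^ q) := by ring
  -- the comparison function B
  set Bf : ℝ → ℝ := fun t => L * ‖v‖ ^ (p + 1) / (Nat.factorial q : ℝ) *
      ((1 - (1 - t) ^ p) / (p : ℝ) - (1 - (1 - t) ^ (p + 1)) / ((p : ℝ) + 1)) with hB
  have hBd : ∀ t : ℝ, HasDerivAt Bf
      (L * ‖v‖ ^ (p + 1) / (Nat.factorial q : ℝ) * (t * (1 - t) ^ q)) t := by
    intro t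
    have hone : HasDerivAt (fun s : ℝ => 1 - s) (-1) t := by
      exact (hasDerivAt_id t).const_sub 1
    have hpw : ∀ j : ℕ, HasDerivAt (fun s : ℝ => (1 - s) ^ j)
        ((j : ℝ) * (1 - t) ^ (j - 1) * (-1)) t := fun j =>
      (hasDerivAt_pow j (1 - t)).comp t hone
    have h1 := ((((hasDerivAt_const t (1:ℝ)).sub (hpw p)).div_const ((p : ℝ))).sub
      (((hasDerivAt_const t (1:ℝ)).sub (hpw (p + 1))).div_const ((p : ℝ) + 1))).const_mul
      (L * ‖v‖ ^ (p + 1) / (Nat.factorial q : ℝ))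
    refine h1.congr_deriv ?_
    simp only [hpdef, Nat.add_sub_cancel]
    have h2 : ((q:ℝ) + 1) ≠ 0 := by positivity
    have h3 : ((q:ℝ) + 1 + 1) ≠ 0 := by positivity
    push_cast
    field_simp
    ring_nf
    all_goals simp
  -- monotonicity comparison
  have key : ∀ (D D' : ℝ → ℝ), (∀ t, HasDerivAt D (D' t) t) →
      (∀ t ∈ Set.Icc (0:ℝ) 1, 0 ≤ D' t) → D 0 ≤ D 1 := by
    intro D D' hD hD'
    have hmono : MonotoneOn D (Set.Icc (0:ℝ) 1) := by
      apply monotoneOn_of_deriv_nonneg (convex_Icc 0 1)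
      · exact fun t _ => (hD t).continuousAt.continuousWithinAt
      · exact fun t _ => (hD t).differentiableAt.differentiableWithinAt
      · intro t htmem
        rw [interior_Icc] at htmem
        rw [(hD t).deriv]
        exact hD' t ⟨le_of_lt htmem.1, le_of_lt htmem.2⟩
    exact hmono (Set.left_mem_Icc.2 zero_le_one) (Set.right_mem_Icc.2 zero_le_one) zero_le_one
  have h6 : |χ 1 - χ 0| ≤ Bf 1 - Bf 0 := by
    have hA := key (fun t => Bf t - χ t)
      (fun t => L * ‖v‖ ^ (p + 1) / (Nat.factorial q : ℝ) * (t * (1 - t) ^ q) -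
        (1 - t) ^ q / (Nat.factorial q : ℝ) * (Φ p t - K))
      (fun t => (hBd t).sub (hχd t))
      (fun t ht => by have := (abs_le.1 (hbound t ht)).2; linarith)
    have hB2 := key (fun t => Bf t + χ t)
      (fun t => L * ‖v‖ ^ (p + 1) / (Nat.factorial q : ℝ) * (t * (1 - t) ^ q) +
        (1 - t) ^ q / (Nat.factorial q : ℝ) * (Φ p t - K))
      (fun t => (hBd t).add (hχd t))
      (fun t ht => by have := (abs_le.1 (hbound t ht)).1; linarith)
    rw [abs_le]
    constructor <;> linarith
  -- endpoint values
  have hχ1 : χ 1 = F y - (1 / (Nat.factorial p : ℝ)) * Φ p 0 := by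
    simp only [hχ]
    have hsum1 : (∑ j ∈ Finset.range p, ((1 - (1:ℝ)) ^ j / (Nat.factorial j : ℝ)) * Φ j 1)
        = Φ 0 1 := by
      rw [Finset.sum_eq_single_of_mem 0 (Finset.mem_range.2 (by omega))]
      · norm_num
      · intro b _ hb
        simp [zero_pow hb]
    rw [hsum1]
    have hΦ01 : Φ 0 1 = F y := by
      simp only [hΦ, iteratedFDeriv_zero_apply, one_smul, hv]
      congr 1
      abel
    rw [hΦ01]
    norm_num
    rw [zero_pow (by rw [hpdef]; omega), hK]
    ring
  have hχ0 : χ 0 = ∑ j ∈ Finset.range p,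
      (1 / (Nat.factorial j : ℝ)) * iteratedFDeriv ℝ j F x (fun _ => v) := by
    simp only [hχ]
    have : ∀ j, Φ j 0 = iteratedFDeriv ℝ j F x (fun _ => v) := by
      intro j; simp [hΦ]
    simp only [this]
    norm_num
  have hΦp0 : Φ p 0 = iteratedFDeriv ℝ p F x (fun _ => v) := by simp [hΦ]
  have hfinal : F y - ∑ j ∈ Finset.range (p + 1),
      (1 / (Nat.factorial j : ℝ)) * iteratedFDeriv ℝ j F x (fun _ => y - x) = χ 1 - χ 0 := by
    rw [Finset.sum_range_succ, hχ1, hχ0, hΦp0, ← hv]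
    ring
  rw [hfinal]
  refine h6.trans (le_of_eq ?_)
  simp only [hB]
  norm_num
  have hfq : (Nat.factorial (p + 1) : ℝ) = ((p:ℝ) + 1) * (p:ℝ) * (Nat.factorial q : ℝ) := by
    simp only [hpdef]
    push_cast [Nat.factorial_succ]
    ring
  rw [hfq]
  have h2 : ((p:ℝ)) ≠ 0 := by simp only [hpdef]; positivity
  have h3 : ((p:ℝ) + 1) ≠ 0 := by simp only [hpdef]; positivity
  have h4 : (Nat.factorial q : ℝ) ≠ 0 := by positivity
  field_simp
  ring_nf
  all_goals simp

lemma euclMap_apply {n m : ℕ} (F : Fin m → EuclideanSpace ℝ (Fin n) → ℝ)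
    (x : EuclideanSpace ℝ (Fin n)) (i : Fin m) : euclMap F x i = F i x := rfl

lemma taylorMap_apply (p : ℕ) {n m : ℕ} (F : Fin m → EuclideanSpace ℝ (Fin n) → ℝ)
    (y x : EuclideanSpace ℝ (Fin n)) (i : Fin m) :
    taylorMap p F y x i = ∑ j ∈ Finset.range (p + 1),
      (1 / (Nat.factorial j : ℝ)) * iteratedFDeriv ℝ j (F i) x (fun _ => y - x) := rfl

-- Euclidean norm bound from coordinatewise bounds
lemma eucl_norm_le {m : ℕ} (u w : EuclideanSpace ℝ (Fin m)) (c : ℝ) (hc : 0 ≤ c)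
    (h : ∀ i, |u i| ≤ c * |w i|) : ‖u‖ ≤ c * ‖w‖ := by
  rw [EuclideanSpace.norm_eq, EuclideanSpace.norm_eq]
  have h1 : ∑ i, ‖u i‖ ^ 2 ≤ c ^ 2 * ∑ i, ‖w i‖ ^ 2 := by
    rw [Finset.mul_sum]
    apply Finset.sum_le_sum
    intro i _
    have := h i
    have h2 : ‖u i‖ ^ 2 ≤ (c * |w i|) ^ 2 := by
      rw [Real.norm_eq_abs]
      exact pow_le_pow_left₀ (abs_nonneg _) this 2
    calc ‖u i‖ ^ 2 ≤ (c * |w i|) ^ 2 := h2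
      _ = c ^ 2 * ‖w i‖ ^ 2 := by rw [Real.norm_eq_abs]; ring
  calc Real.sqrt (∑ i, ‖u i‖ ^ 2) ≤ Real.sqrt (c ^ 2 * ∑ i, ‖w i‖ ^ 2) :=
        Real.sqrt_le_sqrt h1
    _ = c * Real.sqrt (∑ i, ‖w i‖ ^ 2) := by
        rw [Real.sqrt_mul (by positivity), Real.sqrt_sq hc]

-- taylorMap at the center
lemma taylorMap_self (p : ℕ) {n m : ℕ} (F : Fin m → EuclideanSpace ℝ (Fin n) → ℝ)
    (x : EuclideanSpace ℝ (Fin n)) : taylorMap p F x x = euclMap F x := by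
  apply (EuclideanSpace.equiv (Fin m) ℝ).injective
  funext i
  show taylorMap p F x x i = euclMap F x i
  rw [taylorMap_apply, euclMap_apply]
  rw [Finset.sum_eq_single_of_mem 0 (Finset.mem_range.2 (by omega))]
  · simp [iteratedFDeriv_zero_apply]
  · intro b _ hb
    obtain ⟨k, rfl⟩ : ∃ k, b = k + 1 := ⟨b - 1, by omega⟩
    have : (fun _ : Fin (k+1) => x - x) = 0 := by funext; simp
    rw [this, ContinuousMultilinearMap.map_zero, mul_zero]


/-- the `O(k^{-p/(p+1)})` rate of RHOTA for the proximal residual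
(minimal norm subgradient surrogate). -/
theorem stmt4 {n m : ℕ} (hn : 1 ≤ n) (hm : 1 ≤ m) (p : ℕ) (hp : 1 ≤ p)
    (F : Fin m → EuclideanSpace ℝ (Fin n) → ℝ)
    (Lp : EuclideanSpace ℝ (Fin m))
    (hFd : ∀ i, ContDiff ℝ p (F i))
    (hFlip : ∀ i (x y : EuclideanSpace ℝ (Fin n)),
      ‖iteratedFDeriv ℝ p (F i) x - iteratedFDeriv ℝ p (F i) y‖ ≤ Lp i * ‖x - y‖)
    (g : EuclideanSpace ℝ (Fin m) → ℝ) (Lg : ℝ)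
    (hgconv : ConvexOn ℝ Set.univ g)
    (hglip : ∀ a b : EuclideanSpace ℝ (Fin m), |g a - g b| ≤ Lg * ‖a - b‖)
    (C : Set (EuclideanSpace ℝ (Fin n))) (hCne : C.Nonempty) (hCcl : IsClosed C)
    (hCcv : Convex ℝ C)
    (h : EuclideanSpace ℝ (Fin n) → ℝ) (hhconv : ConvexOn ℝ Set.univ h)
    (hhlsc : LowerSemicontinuous h)
    (fstar : ℝ) (hlb : ∀ x ∈ C, fstar ≤ fObj F g h x)
    (M μ δ : ℝ) (hM : Lg * ‖Lp‖ < M) (hμ : M + Lg * ‖Lp‖ < μ) (hδ : 0 ≤ δ)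
    (x : ℕ → EuclideanSpace ℝ (Fin n)) (hxC : ∀ k, x k ∈ C)
    (hdes : ∀ k, sModel p F g h M (x (k + 1)) (x k) ≤ sModel p F g h M (x k) (x k))
    (D : ℕ → ℝ) (hD : ∀ k, D k = ((Nat.factorial (p + 1) : ℝ) *
      (fObj F g h (x k) - fstar) / μ) ^ ((1 : ℝ) / (p + 1)))
    (hinx : ∀ k, sModel p F g h M (x (k + 1)) (x k) -
        sInf ((fun z => sModel p F g h M z (x k)) '' {z | z ∈ C ∧ ‖z - x k‖ ≤ D k}) ≤
      δ / (Nat.factorial (p + 1) : ℝ) * ‖x (k + 1) - x k‖ ^ (p + 1))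
    (y : ℕ → EuclideanSpace ℝ (Fin n)) (hyC : ∀ k, y (k + 1) ∈ C)
    (hy : ∀ k, ∀ z ∈ C,
      fObj F g h (y (k + 1)) +
          μ / (Nat.factorial (p + 1) : ℝ) * ‖y (k + 1) - x k‖ ^ (p + 1) ≤
        fObj F g h z + μ / (Nat.factorial (p + 1) : ℝ) * ‖z - x k‖ ^ (p + 1))
    (Lμ : ℝ) (hLμ : Lμ = (μ + δ + Lg * ‖Lp‖ - M) / (μ - (M + Lg * ‖Lp‖))) :
    ∀ k : ℕ, ∃ j ≤ k,
      ‖y (j + 1) - x j‖ ^ (p + 1) ≤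
        Lμ * (fObj F g h (x 0) - fstar) * (Nat.factorial (p + 1) : ℝ) /
          ((M - Lg * ‖Lp‖) * (k + 1)) ∧
      (μ / (Nat.factorial p : ℝ) * ‖y (j + 1) - x j‖ ^ p) ^ (((p : ℝ) + 1) / p) ≤
        Lμ * (μ / (Nat.factorial p : ℝ)) ^ (((p : ℝ) + 1) / p) *
          ((fObj F g h (x 0) - fstar) * (Nat.factorial (p + 1) : ℝ) /
            ((M - Lg * ‖Lp‖) * (k + 1))) := by
  obtain ⟨c, hcdef⟩ : ∃ c, c = Lg * ‖Lp‖ := ⟨_, rfl⟩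
  obtain ⟨Q, hQdef⟩ : ∃ Q, Q = ((Nat.factorial (p + 1) : ℕ) : ℝ) := ⟨_, rfl⟩
  have hQ : 0 < Q := by rw [hQdef]; positivity
  have sModel_eq : ∀ z w, sModel p F g h M z w =
      g (taylorMap p F z w) + M / Q * ‖z - w‖ ^ (p + 1) + h z := by
    intro z w
    rw [hQdef]
    rfl
  have fObj_eq : ∀ z, fObj F g h z = g (euclMap F z) + h z := fun z => rfl
  simp only [← hcdef] at hM hμ hLμ ⊢
  simp only [← hQdef] at hD hinx hy ⊢
  -- nonnegativity of Lg
  have hLg0 : 0 ≤ Lg := by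
    have h1 := hglip (EuclideanSpace.single ⟨0, hm⟩ (1:ℝ)) 0
    rw [sub_zero, EuclideanSpace.norm_single] at h1
    simp only [norm_one, mul_one] at h1
    exact le_trans (abs_nonneg _) h1
  have hLpi0 : ∀ i, 0 ≤ Lp i := by
    intro i
    have h1 := hFlip i (EuclideanSpace.single ⟨0, hn⟩ (1:ℝ)) 0
    rw [sub_zero, EuclideanSpace.norm_single] at h1
    simp only [norm_one, mul_one] at h1
    exact le_trans (norm_nonneg _) h1
  have hc0 : 0 ≤ c := hcdef ▸ mul_nonneg hLg0 (norm_nonneg _)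
  have hM0 : 0 < M := lt_of_le_of_lt hc0 hM
  have hμ0 : 0 < μ := by linarith
  have hμMc : 0 < μ - (M + c) := by linarith
  -- Taylor approximation bound for the composite
  have happrox : ∀ z w : EuclideanSpace ℝ (Fin n),
      |g (euclMap F z) - g (taylorMap p F z w)| ≤ c / Q * ‖z - w‖ ^ (p + 1) := by
    intro z w
    refine (hglip _ _).trans ?_
    have h2 : ‖euclMap F z - taylorMap p F z w‖ ≤ (‖z - w‖ ^ (p + 1) / Q) * ‖Lp‖ := by
      apply eucl_norm_le _ _ _ (by positivity)
      intro i
      have hcoord : (euclMap F z - taylorMap p F z w) i = F i z - taylorMap p F z w i := rfl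
      rw [hcoord, taylorMap_apply]
      have h3 := taylor_lip_bound p hp (F i) (by exact_mod_cast hFd i) (Lp i)
        (hFlip i) w z
      rw [abs_of_nonneg (hLpi0 i)]
      rw [← hQdef] at h3
      calc |F i z - ∑ j ∈ Finset.range (p + 1),
            (1 / (Nat.factorial j : ℝ)) * iteratedFDeriv ℝ j (F i) w (fun _ => z - w)|
          ≤ Lp i / Q * ‖z - w‖ ^ (p + 1) := h3
        _ = ‖z - w‖ ^ (p + 1) / Q * Lp i := by ring
    calc Lg * ‖euclMap F z - taylorMap p F z w‖
        ≤ Lg * (‖z - w‖ ^ (p + 1) / Q * ‖Lp‖) := mul_le_mul_of_nonneg_left h2 hLg0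
      _ = c / Q * ‖z - w‖ ^ (p + 1) := by rw [hcdef]; ring
  have hself : ∀ w, sModel p F g h M w w = fObj F g h w := by
    intro w
    rw [sModel_eq, fObj_eq, taylorMap_self]
    simp
  -- descent
  have hdescent : ∀ k, fObj F g h (x (k + 1)) +
      (M - c) / Q * ‖x (k + 1) - x k‖ ^ (p + 1) ≤ fObj F g h (x k) := by
    intro k
    have h1 := hdes k
    rw [hself, sModel_eq] at h1
    have h2 := (abs_le.1 (happrox (x (k + 1)) (x k))).2
    rw [fObj_eq]
    ring_nf at h1 h2 ⊢
    linarith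
  -- feasibility of y (k+1)
  have hfeas : ∀ k, ‖y (k + 1) - x k‖ ≤ D k := by
    intro k
    have h1 := hy k (x k) (hxC k)
    simp only [sub_self, norm_zero, zero_pow (Nat.succ_ne_zero p), mul_zero, add_zero] at h1
    have h2 := hlb (y (k + 1)) (hyC k)
    have h3 : ‖y (k + 1) - x k‖ ^ (p + 1) ≤ Q * (fObj F g h (x k) - fstar) / μ := by
      rw [le_div_iff₀ hμ0]
      have h4 : μ / Q * ‖y (k + 1) - x k‖ ^ (p + 1) ≤ fObj F g h (x k) - fstar := by
        linarith
      have h5 := mul_le_mul_of_nonneg_left h4 hQ.le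
      calc ‖y (k + 1) - x k‖ ^ (p + 1) * μ
          = Q * (μ / Q * ‖y (k + 1) - x k‖ ^ (p + 1)) := by
            field_simp
        _ ≤ Q * (fObj F g h (x k) - fstar) := h5
    rw [hD k]
    have ha : (0:ℝ) ≤ ‖y (k + 1) - x k‖ := norm_nonneg _
    have hb : (0:ℝ) ≤ ‖y (k + 1) - x k‖ ^ (p + 1) := by positivity
    have key : ‖y (k + 1) - x k‖ =
        (‖y (k + 1) - x k‖ ^ (p + 1) : ℝ) ^ ((1 : ℝ) / (p + 1)) := by
      rw [← Real.rpow_natCast (‖y (k + 1) - x k‖) (p + 1), ← Real.rpow_mul ha]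
      have : ((p + 1 : ℕ) : ℝ) * ((1 : ℝ) / (p + 1)) = 1 := by
        push_cast
        field_simp
      rw [this, Real.rpow_one]
    rw [key]
    exact Real.rpow_le_rpow hb h3 (by positivity)
  -- lower boundedness of the model over the restricted set
  have hDnn : ∀ k, 0 ≤ D k := by
    intro k
    rw [hD k]
    apply Real.rpow_nonneg
    have := hlb (x k) (hxC k)
    exact div_nonneg (mul_nonneg hQ.le (by linarith)) hμ0.le
  have hbdd : ∀ k, BddBelow ((fun z => sModel p F g h M z (x k)) ''
      {z | z ∈ C ∧ ‖z - x k‖ ≤ D k}) := by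
    intro k
    refine ⟨fstar - c / Q * (D k) ^ (p + 1), ?_⟩
    rintro s ⟨z, ⟨hzC, hzD⟩, rfl⟩
    have h1 := hlb z hzC
    rw [fObj_eq] at h1
    have h2 := (abs_le.1 (happrox z (x k))).2
    have h3 : ‖z - x k‖ ^ (p + 1) ≤ (D k) ^ (p + 1) :=
      pow_le_pow_left₀ (norm_nonneg _) hzD _
    have h4 : c / Q * ‖z - x k‖ ^ (p + 1) ≤ c / Q * (D k) ^ (p + 1) :=
      mul_le_mul_of_nonneg_left h3 (div_nonneg hc0 hQ.le)
    have h5 : 0 ≤ M / Q * ‖z - x k‖ ^ (p + 1) :=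
      mul_nonneg (div_nonneg hM0.le hQ.le) (by positivity)
    show fstar - c / Q * (D k) ^ (p + 1) ≤ sModel p F g h M z (x k)
    rw [sModel_eq]
    linarith
  -- per-step comparison
  have hstep : ∀ k, ‖y (k + 1) - x k‖ ^ (p + 1) ≤ Lμ * ‖x (k + 1) - x k‖ ^ (p + 1) := by
    intro k
    have hmem : sModel p F g h M (y (k + 1)) (x k) ∈
        (fun z => sModel p F g h M z (x k)) '' {z | z ∈ C ∧ ‖z - x k‖ ≤ D k} :=
      ⟨y (k + 1), ⟨hyC k, hfeas k⟩, rfl⟩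
    have hinf := csInf_le (hbdd k) hmem
    have h1 := hinx k
    have h1' : sModel p F g h M (x (k + 1)) (x k) ≤
        sModel p F g h M (y (k + 1)) (x k) +
          δ / Q * ‖x (k + 1) - x k‖ ^ (p + 1) := by linarith
    have h2 := hy k (x (k + 1)) (hxC (k + 1))
    have h3 := (abs_le.1 (happrox (x (k + 1)) (x k))).2
    have h4 := (abs_le.1 (happrox (y (k + 1)) (x k))).1
    rw [sModel_eq, sModel_eq] at h1'
    rw [fObj_eq, fObj_eq] at h2
    have h6 : (μ - (M + c)) / Q * ‖y (k + 1) - x k‖ ^ (p + 1) ≤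
        (μ + δ + c - M) / Q * ‖x (k + 1) - x k‖ ^ (p + 1) := by
      ring_nf at h1' h2 h3 h4 ⊢
      linarith
    have h7 : (μ - (M + c)) * ‖y (k + 1) - x k‖ ^ (p + 1) ≤
        (μ + δ + c - M) * ‖x (k + 1) - x k‖ ^ (p + 1) := by
      rw [div_mul_eq_mul_div, div_mul_eq_mul_div, div_le_div_iff_of_pos_right hQ] at h6
      exact h6
    rw [hLμ, div_mul_eq_mul_div, le_div_iff₀ hμMc]
    ring_nf at h7 ⊢
    linarith
  -- summed descent
  have hMc : 0 < M - c := by linarith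
  have hsum : ∀ k, (M - c) / Q *
      (∑ j ∈ Finset.range (k + 1), ‖x (j + 1) - x j‖ ^ (p + 1)) ≤
      fObj F g h (x 0) - fstar := by
    intro k
    have haux : ∀ k, (M - c) / Q *
        (∑ j ∈ Finset.range (k + 1), ‖x (j + 1) - x j‖ ^ (p + 1)) ≤
        fObj F g h (x 0) - fObj F g h (x (k + 1)) := by
      intro k
      induction k with
      | zero =>
        have h0 := hdescent 0
        norm_num [Finset.sum_range_one] at h0 ⊢
        linarith
      | succ k ih =>
        rw [Finset.sum_range_succ, mul_add]
        have := hdescent (k + 1)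
        linarith
    have h1 := hlb (x (k + 1)) (hxC (k + 1))
    have h2 := haux k
    linarith
  -- pick the index with minimal step size
  intro k
  obtain ⟨j, hjmem, hjmin⟩ := Finset.exists_min_image (Finset.range (k + 1))
    (fun j => ‖x (j + 1) - x j‖ ^ (p + 1)) ⟨0, Finset.mem_range.2 (by omega)⟩
  have hjk : j ≤ k := by
    have := Finset.mem_range.1 hjmem
    omega
  have hk1 : (0:ℝ) < (k:ℝ) + 1 := by positivity
  have hcard : ((k:ℝ) + 1) * ‖x (j + 1) - x j‖ ^ (p + 1) ≤
      ∑ i ∈ Finset.range (k + 1), ‖x (i + 1) - x i‖ ^ (p + 1) := by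
    have := Finset.card_nsmul_le_sum (Finset.range (k + 1))
      (fun i => ‖x (i + 1) - x i‖ ^ (p + 1)) (‖x (j + 1) - x j‖ ^ (p + 1))
      (fun i hi => hjmin i hi)
    rw [Finset.card_range, nsmul_eq_mul] at this
    push_cast at this
    exact this
  have hrj : ‖x (j + 1) - x j‖ ^ (p + 1) ≤
      (fObj F g h (x 0) - fstar) * Q / ((M - c) * ((k:ℝ) + 1)) := by
    rw [le_div_iff₀ (by positivity)]
    have h1 := hsum k
    have h2 : (M - c) / Q * (((k:ℝ) + 1) * ‖x (j + 1) - x j‖ ^ (p + 1)) ≤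
        (M - c) / Q * (∑ i ∈ Finset.range (k + 1), ‖x (i + 1) - x i‖ ^ (p + 1)) :=
      mul_le_mul_of_nonneg_left hcard (div_nonneg hMc.le hQ.le)
    have h3 : (M - c) / Q * (((k:ℝ) + 1) * ‖x (j + 1) - x j‖ ^ (p + 1)) ≤
        fObj F g h (x 0) - fstar := le_trans h2 h1
    have h4 := mul_le_mul_of_nonneg_left h3 hQ.le
    have h5 : Q * ((M - c) / Q * (((k:ℝ) + 1) * ‖x (j + 1) - x j‖ ^ (p + 1))) =
        ‖x (j + 1) - x j‖ ^ (p + 1) * ((M - c) * ((k:ℝ) + 1)) := by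
      field_simp
    rw [h5] at h4
    linarith
  have hLμnn : 0 ≤ Lμ := by
    rw [hLμ]
    apply div_nonneg <;> linarith
  have hconc1 : ‖y (j + 1) - x j‖ ^ (p + 1) ≤
      Lμ * (fObj F g h (x 0) - fstar) * Q / ((M - c) * ((k:ℝ) + 1)) := by
    calc ‖y (j + 1) - x j‖ ^ (p + 1) ≤ Lμ * ‖x (j + 1) - x j‖ ^ (p + 1) := hstep j
      _ ≤ Lμ * ((fObj F g h (x 0) - fstar) * Q / ((M - c) * ((k:ℝ) + 1))) :=
          mul_le_mul_of_nonneg_left hrj hLμnn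
      _ = Lμ * (fObj F g h (x 0) - fstar) * Q / ((M - c) * ((k:ℝ) + 1)) := by ring
  refine ⟨j, hjk, hconc1, ?_⟩
  -- second form of the conclusion
  have hfp : (0:ℝ) < (Nat.factorial p : ℝ) := by positivity
  have hμdiv : (0:ℝ) ≤ μ / (Nat.factorial p : ℝ) := div_nonneg hμ0.le hfp.le
  have hppos : (0:ℝ) < (p:ℝ) := by exact_mod_cast hp
  set a := ‖y (j + 1) - x j‖ with hadef
  have ha : (0:ℝ) ≤ a := norm_nonneg _
  rw [Real.mul_rpow hμdiv (pow_nonneg ha p)]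
  have hpe : (a ^ p : ℝ) ^ (((p:ℝ) + 1) / p) = a ^ (p + 1) := by
    rw [← Real.rpow_natCast a p, ← Real.rpow_mul ha]
    have : (p:ℝ) * (((p:ℝ) + 1) / p) = ((p + 1 : ℕ) : ℝ) := by
      push_cast
      field_simp
    rw [this, Real.rpow_natCast]
  rw [hpe]
  have h9 : a ^ (p + 1) ≤ Lμ * ((fObj F g h (x 0) - fstar) * Q /
      ((M - c) * ((k:ℝ) + 1))) := by
    calc a ^ (p + 1) ≤ Lμ * (fObj F g h (x 0) - fstar) * Q / ((M - c) * ((k:ℝ) + 1)) :=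
          hconc1
      _ = Lμ * ((fObj F g h (x 0) - fstar) * Q / ((M - c) * ((k:ℝ) + 1))) := by ring
  calc (μ / (Nat.factorial p : ℝ)) ^ (((p:ℝ) + 1) / p) * a ^ (p + 1)
      ≤ (μ / (Nat.factorial p : ℝ)) ^ (((p:ℝ) + 1) / p) *
        (Lμ * ((fObj F g h (x 0) - fstar) * Q / ((M - c) * ((k:ℝ) + 1)))) :=
        mul_le_mul_of_nonneg_left h9 (Real.rpow_nonneg hμdiv _)
    _ = Lμ * (μ / (Nat.factorial p : ℝ)) ^ (((p:ℝ) + 1) / p) *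
        ((fObj F g h (x 0) - fstar) * Q / ((M - c) * ((k:ℝ) + 1))) := by ring
end
end

section
/- Suppose M > L_g‖L_p‖, μ > M + L_g‖L_p‖, δ ≥ 0, (x_k)_{k≥0} is a RHOTA sequence satisfying the inexact optimality condition for each k, and y_{k+1} is a global minimizer over C of y ↦ f(y) + (μ/(p+1)!)‖y − x_k‖^{p+1}. Assume moreover the KL-type bound f(y_{k+1}) − f_* ≤ σ_q ((μ/p!)‖y_{k+1} − x_k‖^{p})^{q} for all k ≥ 0. Then, with C₁ := σ_q L_μ^{pq/(p+1)} (μ/p!)^{q} ((p+1)!/(M − L_g‖L_p‖))^{pq/(p+1)} and C₂ := (L_μ(M + L_g‖L_p‖) + δ + L_g‖L_p‖ − M)/(M − L_g‖L_p‖), for every k ≥ 0: f(x_{k+1}) − f_* ≤ C₁ (f(x_k) − f(x_{k+1}))^{pq/(p+1)} + C₂ (f(x_k) − f(x_{k+1})). -/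
open scoped BigOperators RealInnerProductSpace

noncomputable section

section Aux

lemma rhota_abs_le_of_hasDeriv_le {w B w' B' : ℝ → ℝ} {t : ℝ} (ht : 0 ≤ t)
    (hw : ∀ u, HasDerivAt w (w' u) u) (hB : ∀ u, HasDerivAt B (B' u) u)
    (hw0 : w 0 = 0) (hB0 : B 0 = 0)
    (hle : ∀ u, 0 ≤ u → |w' u| ≤ B' u) : |w t| ≤ B t := by
  have key : ∀ g g' : ℝ → ℝ, (∀ u, HasDerivAt g (g' u) u) → (∀ u, 0 ≤ u → 0 ≤ g' u) →
      g 0 ≤ g t := by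
    intro g g' hg hg'
    have hmono : MonotoneOn g (Set.Icc 0 t) := by
      apply monotoneOn_of_deriv_nonneg (convex_Icc 0 t)
      · exact fun u _ => (hg u).continuousAt.continuousWithinAt
      · intro u hu
        exact ((hg u).differentiableAt).differentiableWithinAt
      · intro u hu
        rw [interior_Icc] at hu
        rw [(hg u).deriv]
        exact hg' u hu.1.le
    exact hmono (Set.left_mem_Icc.mpr ht) (Set.right_mem_Icc.mpr ht) ht
  have h1 : w t ≤ B t := by
    have := key (fun u => B u - w u) (fun u => B' u - w' u)
      (fun u => (hB u).sub (hw u))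
      (fun u hu => by have := abs_le.mp (hle u hu); show (0:ℝ) ≤ _; beta_reduce; linarith)
    simp only [hB0, hw0, sub_zero] at this; linarith
  have h2 : -(B t) ≤ w t := by
    have := key (fun u => B u + w u) (fun u => B' u + w' u)
      (fun u => (hB u).add (hw u))
      (fun u hu => by have := abs_le.mp (hle u hu); show (0:ℝ) ≤ _; beta_reduce; linarith)
    simp only [hB0, hw0, add_zero] at this; linarith
  rw [abs_le]; exact ⟨h2, h1⟩

lemma rhota_taylor1d : ∀ (k : ℕ) (φ : ℝ → ℝ) (ℓ : ℝ), 0 ≤ ℓ → ContDiff ℝ k φ →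
    (∀ s t : ℝ, |iteratedDeriv k φ s - iteratedDeriv k φ t| ≤ ℓ * |s - t|) →
    ∀ t : ℝ, 0 ≤ t →
    |φ t - ∑ j ∈ Finset.range (k + 1),
        (1 / (Nat.factorial j : ℝ)) * iteratedDeriv j φ 0 * t ^ j|
      ≤ ℓ * t ^ (k + 1) / (Nat.factorial (k + 1) : ℝ) := by
  intro k
  induction k with
  | zero =>
    intro φ ℓ hℓ hφ hlip t ht
    have := hlip t 0
    simp only [iteratedDeriv_zero] at this
    simp only [iteratedDeriv_zero, Finset.range_one, Finset.sum_singleton, Nat.factorial_zero,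
      Nat.cast_one, pow_zero, mul_one, one_div, inv_one, one_mul, zero_add, pow_one,
      Nat.factorial_one]
    rw [sub_zero, abs_of_nonneg ht] at this
    linarith
  | succ k IH =>
    intro φ ℓ hℓ hφ hlip t ht
    have hφ' : ContDiff ℝ (k + 1 : ℕ) φ := by exact_mod_cast hφ
    have hdiff : Differentiable ℝ φ := hφ'.differentiable
      (by simp)
    set ψ := deriv φ with hψdef
    have hψ : ContDiff ℝ k ψ := by
      have := (contDiff_succ_iff_deriv.mp
        (by exact_mod_cast hφ' : ContDiff ℝ ((k : WithTop ℕ∞) + 1) φ)).2.2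
      exact this
    have hlipψ : ∀ s t : ℝ, |iteratedDeriv k ψ s - iteratedDeriv k ψ t| ≤ ℓ * |s - t| := by
      intro s t
      rw [hψdef, ← iteratedDeriv_succ']
      exact hlip s t
    have IHψ := IH ψ ℓ hℓ hψ hlipψ
    set d : ℕ → ℝ := fun j => iteratedDeriv j φ 0 with hd
    set P : ℝ → ℝ := fun u => ∑ j ∈ Finset.range (k + 2),
      (1 / (Nat.factorial j : ℝ)) * d j * u ^ j with hP
    set Q : ℝ → ℝ := fun u => ∑ j ∈ Finset.range (k + 1),
      (1 / (Nat.factorial j : ℝ)) * iteratedDeriv j ψ 0 * u ^ j with hQ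
    have hPderiv : ∀ u, HasDerivAt P (Q u) u := by
      intro u
      have h1 : HasDerivAt P (∑ j ∈ Finset.range (k + 2),
          (1 / (Nat.factorial j : ℝ)) * d j * (j * u ^ (j - 1))) u := by
        apply HasDerivAt.fun_sum
        intro j _
        simpa [mul_assoc] using (hasDerivAt_pow j u).const_mul ((1 / (Nat.factorial j : ℝ)) * d j)
      convert h1 using 1
      rw [Finset.sum_range_succ']
      simp only [Nat.cast_zero, zero_mul, mul_zero, add_zero]
      apply Finset.sum_congr rfl
      intro j _
      have hdd : d (j + 1) = iteratedDeriv j ψ 0 := by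
        rw [hd, hψdef, ← iteratedDeriv_succ']
      rw [← hdd]
      have hfac : (Nat.factorial (j + 1) : ℝ) = (j + 1) * (Nat.factorial j : ℝ) := by
        rw [Nat.factorial_succ]; push_cast; ring
      have hfj : (Nat.factorial j : ℝ) ≠ 0 := Nat.cast_ne_zero.mpr (Nat.factorial_ne_zero j)
      have hfj1 : (Nat.factorial (j + 1) : ℝ) ≠ 0 :=
        Nat.cast_ne_zero.mpr (Nat.factorial_ne_zero (j + 1))
      simp only [Nat.add_sub_cancel]
      field_simp [hfac]
      rw [Nat.factorial_succ]; push_cast; ring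
    have hw0 : φ 0 - P 0 = 0 := by
      have : P 0 = φ 0 := by
        rw [hP]
        simp only []
        rw [Finset.sum_range_succ']
        simp [hd]
      rw [this, sub_self]
    set B : ℝ → ℝ := fun u => ℓ / (Nat.factorial (k + 2) : ℝ) * u ^ (k + 2) with hB
    have hBderiv : ∀ u,
        HasDerivAt B (ℓ / (Nat.factorial (k + 2) : ℝ) * ((k + 2) * u ^ (k + 1))) u := by
      intro u
      simpa using (hasDerivAt_pow (k + 2) u).const_mul (ℓ / (Nat.factorial (k + 2) : ℝ))
    have key : |φ t - P t| ≤ B t := by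
      apply rhota_abs_le_of_hasDeriv_le ht
        (fun u => ((hdiff u).hasDerivAt).sub (hPderiv u)) hBderiv hw0 (by simp [hB])
      intro u hu
      have h2 := IHψ u hu
      have hfac : (Nat.factorial (k + 2) : ℝ) = (k + 2) * (Nat.factorial (k + 1) : ℝ) := by
        rw [Nat.factorial_succ]; push_cast; ring
      have : ℓ / (Nat.factorial (k + 2) : ℝ) * ((k + 2) * u ^ (k + 1))
          = ℓ * u ^ (k + 1) / (Nat.factorial (k + 1) : ℝ) := by
        rw [hfac]
        have : ((k : ℝ) + 2) ≠ 0 := by positivity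
        field_simp
      rw [this]
      exact h2
    calc |φ t - ∑ j ∈ Finset.range (k + 1 + 1),
        (1 / (Nat.factorial j : ℝ)) * iteratedDeriv j φ 0 * t ^ j| = |φ t - P t| := rfl
      _ ≤ B t := key
      _ = ℓ * t ^ (k + 1 + 1) / (Nat.factorial (k + 1 + 1) : ℝ) := by rw [hB]; ring

variable {E : Type*} [NormedAddCommGroup E] [NormedSpace ℝ E]

lemma rhota_itfd_const_add {f : E → ℝ} {N : ℕ} (hf : ContDiff ℝ N f) (x : E) :
    ∀ j, j ≤ N → ∀ u,
      iteratedFDeriv ℝ j (fun t => f (x + t)) u = iteratedFDeriv ℝ j f (x + u) := by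
  intro j
  induction j with
  | zero =>
    intro _ u
    ext m
    simp [iteratedFDeriv_zero_apply]
  | succ j IH =>
    intro hj u
    have hj' : j ≤ N := Nat.le_of_succ_le hj
    have hIH : iteratedFDeriv ℝ j (fun t => f (x + t)) = fun u => iteratedFDeriv ℝ j f (x + u) :=
      funext (IH hj' ·)
    have hdiff : DifferentiableAt ℝ (iteratedFDeriv ℝ j f) (x + u) :=
      (hf.differentiable_iteratedFDeriv (by exact_mod_cast hj)) (x + u)
    have hcomp : fderiv ℝ (fun u => iteratedFDeriv ℝ j f (x + u)) u
        = fderiv ℝ (iteratedFDeriv ℝ j f) (x + u) := by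
      have h1 : HasFDerivAt (fun u : E => x + u) (ContinuousLinearMap.id ℝ E) u :=
        (hasFDerivAt_id u).const_add x
      have h2 := (hdiff.hasFDerivAt.comp u h1).fderiv
      simpa [Function.comp_def] using h2
    rw [iteratedFDeriv_succ_eq_comp_left, iteratedFDeriv_succ_eq_comp_left]
    simp only [Function.comp_apply, hIH, hcomp]

lemma rhota_taylor_multi {p : ℕ} {f : E → ℝ} (hf : ContDiff ℝ p f) {L : ℝ} (hL : 0 ≤ L)
    (hlip : ∀ a b : E, ‖iteratedFDeriv ℝ p f a - iteratedFDeriv ℝ p f b‖ ≤ L * ‖a - b‖)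
    (x y : E) :
    |f y - ∑ j ∈ Finset.range (p + 1),
        (1 / (Nat.factorial j : ℝ)) * iteratedFDeriv ℝ j f x (fun _ => y - x)|
      ≤ L / (Nat.factorial (p + 1) : ℝ) * ‖y - x‖ ^ (p + 1) := by
  set v : E := y - x with hv
  set φ : ℝ → ℝ := fun t => f (x + t • v) with hφ
  set Lmap : ℝ →L[ℝ] E := ContinuousLinearMap.toSpanSingleton ℝ v with hLmap
  set g : E → ℝ := fun u => f (x + u) with hg
  have hgC : ContDiff ℝ p g := hf.comp (contDiff_const.add contDiff_id)
  have hφeq : φ = g ∘ Lmap := by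
    funext t
    simp [hφ, hg, hLmap, ContinuousLinearMap.toSpanSingleton_apply]
  have hitd : ∀ j, j ≤ p → ∀ t : ℝ,
      iteratedDeriv j φ t = iteratedFDeriv ℝ j f (x + t • v) (fun _ => v) := by
    intro j hj t
    rw [iteratedDeriv_eq_iteratedFDeriv, hφeq,
      Lmap.iteratedFDeriv_comp_right hgC t (by exact_mod_cast hj)]
    rw [ContinuousMultilinearMap.compContinuousLinearMap_apply]
    have : Lmap t = t • v := ContinuousLinearMap.toSpanSingleton_apply ℝ v t
    rw [rhota_itfd_const_add hf x j hj (Lmap t), this]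
    congr 1
    funext i
    exact ContinuousLinearMap.toSpanSingleton_apply ℝ v 1 |>.trans (one_smul ℝ v)
  have hφC : ContDiff ℝ p φ := by
    rw [hφeq]; exact hgC.comp Lmap.contDiff
  have hlipφ : ∀ s t : ℝ, |iteratedDeriv p φ s - iteratedDeriv p φ t| ≤
      (L * ‖v‖ ^ (p + 1)) * |s - t| := by
    intro s t
    rw [hitd p le_rfl s, hitd p le_rfl t]
    have h1 : |iteratedFDeriv ℝ p f (x + s • v) (fun _ => v)
        - iteratedFDeriv ℝ p f (x + t • v) (fun _ => v)|
        ≤ ‖iteratedFDeriv ℝ p f (x + s • v) - iteratedFDeriv ℝ p f (x + t • v)‖ * ‖v‖ ^ p := by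
      have := (iteratedFDeriv ℝ p f (x + s • v) - iteratedFDeriv ℝ p f (x + t • v)).le_opNorm
        (fun _ => v)
      simpa [ContinuousMultilinearMap.sub_apply, Real.norm_eq_abs] using this
    have h2 := hlip (x + s • v) (x + t • v)
    have h3 : x + s • v - (x + t • v) = (s - t) • v := by
      rw [sub_smul]; abel
    rw [h3, norm_smul, Real.norm_eq_abs] at h2
    calc |iteratedFDeriv ℝ p f (x + s • v) (fun _ => v)
        - iteratedFDeriv ℝ p f (x + t • v) (fun _ => v)|
        ≤ ‖iteratedFDeriv ℝ p f (x + s • v) - iteratedFDeriv ℝ p f (x + t • v)‖ * ‖v‖ ^ p := h1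
      _ ≤ (L * (|s - t| * ‖v‖)) * ‖v‖ ^ p := by
          apply mul_le_mul_of_nonneg_right h2 (by positivity)
      _ = (L * ‖v‖ ^ (p + 1)) * |s - t| := by ring
  have hmain := rhota_taylor1d p φ (L * ‖v‖ ^ (p + 1)) (by positivity) hφC hlipφ 1 zero_le_one
  have hφ1 : φ 1 = f y := by simp [hφ, hv]
  have hφj : ∀ j ∈ Finset.range (p + 1),
      (1 / (Nat.factorial j : ℝ)) * iteratedDeriv j φ 0 * (1 : ℝ) ^ j
      = (1 / (Nat.factorial j : ℝ)) * iteratedFDeriv ℝ j f x (fun _ => v) := by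
    intro j hj
    rw [hitd j (Nat.lt_succ_iff.mp (Finset.mem_range.mp hj))]
    simp
  rw [Finset.sum_congr rfl hφj, hφ1] at hmain
  calc |f y - ∑ j ∈ Finset.range (p + 1),
      (1 / (Nat.factorial j : ℝ)) * iteratedFDeriv ℝ j f x (fun _ => y - x)|
      ≤ (L * ‖v‖ ^ (p + 1)) * 1 ^ (p + 1) / (Nat.factorial (p + 1) : ℝ) := hmain
    _ = L / (Nat.factorial (p + 1) : ℝ) * ‖y - x‖ ^ (p + 1) := by rw [← hv]; ring

lemma rhota_eucl_norm_le {m : ℕ} (w Lp : EuclideanSpace ℝ (Fin m)) (c : ℝ) (hc : 0 ≤ c)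
    (hw : ∀ i, |w i| ≤ Lp i * c) : ‖w‖ ≤ ‖Lp‖ * c := by
  rw [EuclideanSpace.norm_eq, EuclideanSpace.norm_eq]
  have h1 : ∑ i, ‖w i‖ ^ 2 ≤ (∑ i, ‖Lp i‖ ^ 2) * c ^ 2 := by
    rw [Finset.sum_mul]
    apply Finset.sum_le_sum
    intro i _
    have := hw i
    rw [Real.norm_eq_abs, Real.norm_eq_abs]
    calc |w i| ^ 2 ≤ (Lp i * c) ^ 2 := by
          apply sq_le_sq' <;>
            [linarith [abs_nonneg (w i), neg_abs_le (w i)]; linarith [le_abs_self (w i)]]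
      _ = |Lp i| ^ 2 * c ^ 2 := by rw [mul_pow, sq_abs]
  calc Real.sqrt (∑ i, ‖w i‖ ^ 2) ≤ Real.sqrt ((∑ i, ‖Lp i‖ ^ 2) * c ^ 2) := Real.sqrt_le_sqrt h1
    _ = Real.sqrt (∑ i, ‖Lp i‖ ^ 2) * c := by
        rw [Real.sqrt_mul (by positivity), Real.sqrt_sq hc]

lemma rhota_root_le {a A : ℝ} (ha : 0 ≤ a) (p : ℕ) (h : a ^ (p + 1) ≤ A) :
    a ≤ A ^ ((1 : ℝ) / ((p : ℝ) + 1)) := by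
  have hA : 0 ≤ A := le_trans (by positivity) h
  have hp1 : ((p : ℝ) + 1) ≠ 0 := by positivity
  have h1 : a = (a ^ (p + 1)) ^ ((1 : ℝ) / ((p : ℝ) + 1)) := by
    rw [← Real.rpow_natCast a (p + 1), ← Real.rpow_mul ha]
    push_cast
    rw [mul_one_div, div_self hp1, Real.rpow_one]
  rw [h1]
  exact Real.rpow_le_rpow (by positivity) h (by positivity)

end Aux

set_option maxHeartbeats 1600000 in
/-- the key recurrence in function values under a KL-type bound at the
proximal points, leading to the improved convergence rates of RHOTA. -/
theorem stmt9 {n m : ℕ} (hn : 1 ≤ n) (hm : 1 ≤ m) (p : ℕ) (hp : 1 ≤ p)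
    (F : Fin m → EuclideanSpace ℝ (Fin n) → ℝ)
    (Lp : EuclideanSpace ℝ (Fin m))
    (hFd : ∀ i, ContDiff ℝ p (F i))
    (hFlip : ∀ i (x y : EuclideanSpace ℝ (Fin n)),
      ‖iteratedFDeriv ℝ p (F i) x - iteratedFDeriv ℝ p (F i) y‖ ≤ Lp i * ‖x - y‖)
    (g : EuclideanSpace ℝ (Fin m) → ℝ) (Lg : ℝ)
    (hgconv : ConvexOn ℝ Set.univ g)
    (hglip : ∀ a b : EuclideanSpace ℝ (Fin m), |g a - g b| ≤ Lg * ‖a - b‖)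
    (C : Set (EuclideanSpace ℝ (Fin n))) (hCne : C.Nonempty) (hCcl : IsClosed C)
    (hCcv : Convex ℝ C)
    (h : EuclideanSpace ℝ (Fin n) → ℝ) (hhconv : ConvexOn ℝ Set.univ h)
    (hhlsc : LowerSemicontinuous h)
    (fstar : ℝ) (hlb : ∀ x ∈ C, fstar ≤ fObj F g h x)
    (M μ δ : ℝ) (hM : Lg * ‖Lp‖ < M) (hμ : M + Lg * ‖Lp‖ < μ) (hδ : 0 ≤ δ)
    (x : ℕ → EuclideanSpace ℝ (Fin n)) (hxC : ∀ k, x k ∈ C)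
    (hdes : ∀ k, sModel p F g h M (x (k + 1)) (x k) ≤ sModel p F g h M (x k) (x k))
    (D : ℕ → ℝ) (hD : ∀ k, D k = ((Nat.factorial (p + 1) : ℝ) *
      (fObj F g h (x k) - fstar) / μ) ^ ((1 : ℝ) / (p + 1)))
    (hinx : ∀ k, sModel p F g h M (x (k + 1)) (x k) -
        sInf ((fun z => sModel p F g h M z (x k)) '' {z | z ∈ C ∧ ‖z - x k‖ ≤ D k}) ≤
      δ / (Nat.factorial (p + 1) : ℝ) * ‖x (k + 1) - x k‖ ^ (p + 1))
    (y : ℕ → EuclideanSpace ℝ (Fin n)) (hyC : ∀ k, y (k + 1) ∈ C)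
    (hy : ∀ k, ∀ z ∈ C,
      fObj F g h (y (k + 1)) +
          μ / (Nat.factorial (p + 1) : ℝ) * ‖y (k + 1) - x k‖ ^ (p + 1) ≤
        fObj F g h z + μ / (Nat.factorial (p + 1) : ℝ) * ‖z - x k‖ ^ (p + 1))
    (Lμ : ℝ) (hLμ : Lμ = (μ + δ + Lg * ‖Lp‖ - M) / (μ - (M + Lg * ‖Lp‖)))
    (fstar2 : ℝ) (hfstar2 : ∀ k, fstar2 ≤ fObj F g h (x k))
    (σq q : ℝ) (hσq : 0 < σq) (hq : 0 < q)
    (hKL : ∀ k, fObj F g h (y (k + 1)) - fstar2 ≤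
      σq * (μ / (Nat.factorial p : ℝ) * ‖y (k + 1) - x k‖ ^ p) ^ q)
    (C₁ C₂ : ℝ)
    (hC₁ : C₁ = σq * Lμ ^ ((p : ℝ) * q / (p + 1)) * (μ / (Nat.factorial p : ℝ)) ^ q *
      ((Nat.factorial (p + 1) : ℝ) / (M - Lg * ‖Lp‖)) ^ ((p : ℝ) * q / (p + 1)))
    (hC₂ : C₂ = (Lμ * (M + Lg * ‖Lp‖) + δ + Lg * ‖Lp‖ - M) / (M - Lg * ‖Lp‖)) :
    ∀ k, fObj F g h (x (k + 1)) - fstar2 ≤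
      C₁ * (fObj F g h (x k) - fObj F g h (x (k + 1))) ^ ((p : ℝ) * q / (p + 1)) +
      C₂ * (fObj F g h (x k) - fObj F g h (x (k + 1))) := by
  -- basic positivity facts
  set c : ℝ := Lg * ‖Lp‖ with hcdef
  set K : ℝ := (Nat.factorial (p + 1) : ℝ) with hKdef
  have hK : (0 : ℝ) < K := by
    rw [hKdef]; exact_mod_cast Nat.factorial_pos (p + 1)
  have hLg : 0 ≤ Lg := by
    have h1 := hglip (EuclideanSpace.single (⟨0, hm⟩ : Fin m) (1 : ℝ)) 0
    rw [sub_zero, EuclideanSpace.norm_single] at h1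
    simp only [norm_one, mul_one] at h1
    exact le_trans (abs_nonneg _) h1
  have hLpi : ∀ i, 0 ≤ Lp i := by
    intro i
    have h1 := hFlip i (EuclideanSpace.single (⟨0, hn⟩ : Fin n) (1 : ℝ)) 0
    rw [sub_zero, EuclideanSpace.norm_single] at h1
    simp only [norm_one, mul_one] at h1
    exact le_trans (norm_nonneg _) h1
  have hc : 0 ≤ c := mul_nonneg hLg (norm_nonneg _)
  have hMc : 0 < M - c := by linarith
  have hμc : 0 < μ - (M + c) := by linarith
  have hμpos : 0 < μ := by linarith
  have hMC2 : 0 < M + c := by linarith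
  have hLμnum : 0 < μ + δ + c - M := by linarith
  have hLμpos : 0 < Lμ := by rw [hLμ]; positivity
  have hLμ1 : 1 ≤ Lμ := by
    rw [hLμ, le_div_iff₀ hμc]
    linarith
  -- Taylor error bound for the composite map
  have hT : ∀ z x' : EuclideanSpace ℝ (Fin n),
      |g (euclMap F z) - g (taylorMap p F z x')| ≤ c / K * ‖z - x'‖ ^ (p + 1) := by
    intro z x'
    have hcomp : ∀ i : Fin m, |(euclMap F z - taylorMap p F z x') i|
        ≤ Lp i * (‖z - x'‖ ^ (p + 1) / K) := by
      intro i
      have := rhota_taylor_multi (hFd i) (hLpi i) (hFlip i) x' z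
      have heq : (euclMap F z - taylorMap p F z x') i
          = F i z - ∑ j ∈ Finset.range (p + 1),
            (1 / (Nat.factorial j : ℝ)) * iteratedFDeriv ℝ j (F i) x' (fun _ => z - x') := rfl
      rw [heq]
      calc |F i z - ∑ j ∈ Finset.range (p + 1),
          (1 / (Nat.factorial j : ℝ)) * iteratedFDeriv ℝ j (F i) x' (fun _ => z - x')|
          ≤ Lp i / K * ‖z - x'‖ ^ (p + 1) := this
        _ = Lp i * (‖z - x'‖ ^ (p + 1) / K) := by ring
    have hnorm : ‖euclMap F z - taylorMap p F z x'‖ ≤ ‖Lp‖ * (‖z - x'‖ ^ (p + 1) / K) :=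
      rhota_eucl_norm_le _ _ _ (by positivity) hcomp
    calc |g (euclMap F z) - g (taylorMap p F z x')|
        ≤ Lg * ‖euclMap F z - taylorMap p F z x'‖ := hglip _ _
      _ ≤ Lg * (‖Lp‖ * (‖z - x'‖ ^ (p + 1) / K)) := by
          apply mul_le_mul_of_nonneg_left hnorm hLg
      _ = c / K * ‖z - x'‖ ^ (p + 1) := by rw [hcdef]; ring
  -- bounds relating the model and the objective
  have hlow : ∀ z z' : EuclideanSpace ℝ (Fin n),
      fObj F g h z + (M - c) / K * ‖z - z'‖ ^ (p + 1) ≤ sModel p F g h M z z' := by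
    intro z z'
    have h1 := abs_le.mp (hT z z')
    have e1 : (M - c) / K * ‖z - z'‖ ^ (p + 1)
        = M / K * ‖z - z'‖ ^ (p + 1) - c / K * ‖z - z'‖ ^ (p + 1) := by ring
    unfold fObj sModel
    rw [← hKdef]
    have := h1.1
    linarith [e1, this]
  have hhigh : ∀ z z' : EuclideanSpace ℝ (Fin n),
      sModel p F g h M z z' ≤ fObj F g h z + (M + c) / K * ‖z - z'‖ ^ (p + 1) := by
    intro z z'
    have h1 := abs_le.mp (hT z z')
    have e1 : (M + c) / K * ‖z - z'‖ ^ (p + 1)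
        = M / K * ‖z - z'‖ ^ (p + 1) + c / K * ‖z - z'‖ ^ (p + 1) := by ring
    unfold fObj sModel
    rw [← hKdef]
    have := h1.2
    linarith [e1, this]
  -- the model at the center equals the objective
  have hself : ∀ z : EuclideanSpace ℝ (Fin n), sModel p F g h M z z = fObj F g h z := by
    intro z
    have htay : taylorMap p F z z = euclMap F z := by
      apply PiLp.ext
      intro i
      show (∑ j ∈ Finset.range (p + 1),
        (1 / (Nat.factorial j : ℝ)) * iteratedFDeriv ℝ j (F i) z (fun _ => z - z)) = F i z
      rw [Finset.sum_range_succ']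
      have hz : ∀ j ∈ Finset.range p, (1 / (Nat.factorial (j + 1) : ℝ))
          * iteratedFDeriv ℝ (j + 1) (F i) z (fun _ => z - z) = 0 := by
        intro j _
        have : (fun _ : Fin (j + 1) => z - z) = fun _ : Fin (j + 1) => (0 : EuclideanSpace ℝ (Fin n)) := by
          funext _; rw [sub_self]
        rw [this]
        rw [(iteratedFDeriv ℝ (j + 1) (F i) z).map_coord_zero (0 : Fin (j + 1)) rfl]
        ring
      rw [Finset.sum_congr rfl hz]
      simp [iteratedFDeriv_zero_apply]
    unfold sModel fObj
    rw [htay, sub_self, norm_zero, zero_pow (Nat.succ_ne_zero p), mul_zero, add_zero]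
  -- now fix k
  intro k
  set f1 : ℝ := fObj F g h (x (k + 1)) with hf1
  set f0 : ℝ := fObj F g h (x k) with hf0
  set f2 : ℝ := fObj F g h (y (k + 1)) with hf2
  set r : ℝ := ‖x (k + 1) - x k‖ with hr
  set s : ℝ := ‖y (k + 1) - x k‖ with hs
  have hr0 : 0 ≤ r := norm_nonneg _
  have hs0 : 0 ≤ s := norm_nonneg _
  -- descent inequality
  have hdes1 : f1 + (M - c) / K * r ^ (p + 1) ≤ f0 := by
    have := hdes k
    rw [hself (x k)] at this
    have h2 := hlow (x (k + 1)) (x k)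
    rw [← hf1, ← hr] at h2
    rw [← hf0] at this
    linarith
  have hΔ0 : 0 ≤ f0 - f1 := by nlinarith [mul_nonneg (le_of_lt (div_pos hMc hK)) (pow_nonneg hr0 (p + 1))]
  have hD1 : r ^ (p + 1) ≤ K * (f0 - f1) / (M - c) := by
    rw [le_div_iff₀ hMc]
    have : (M - c) / K * r ^ (p + 1) ≤ f0 - f1 := by linarith
    calc r ^ (p + 1) * (M - c) = K * ((M - c) / K * r ^ (p + 1)) := by field_simp
      _ ≤ K * (f0 - f1) := by apply mul_le_mul_of_nonneg_left this hK.le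
      _ = K * (f0 - f1) := rfl
  -- prox point is in the ball
  have hprox0 : f2 + μ / K * s ^ (p + 1) ≤ f0 := by
    have := hy k (x k) (hxC k)
    rw [← hf2, ← hf0, ← hs, sub_self, norm_zero,
      zero_pow (Nat.succ_ne_zero p), mul_zero, add_zero] at this
    exact this
  have hf2lb : fstar ≤ f2 := hlb _ (hyC k)
  have hsD : s ≤ D k := by
    rw [hD k, ← hf0]
    have h1 : s ^ (p + 1) ≤ K * (f0 - fstar) / μ := by
      rw [le_div_iff₀ hμpos]
      have : μ / K * s ^ (p + 1) ≤ f0 - fstar := by linarith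
      calc s ^ (p + 1) * μ = K * (μ / K * s ^ (p + 1)) := by field_simp
        _ ≤ K * (f0 - fstar) := by apply mul_le_mul_of_nonneg_left this hK.le
    exact_mod_cast rhota_root_le hs0 p h1
  -- the inf is bounded below and attained bound at the prox point
  have hbdd : BddBelow ((fun z => sModel p F g h M z (x k)) '' {z | z ∈ C ∧ ‖z - x k‖ ≤ D k}) := by
    refine ⟨fstar, ?_⟩
    rintro a ⟨z, ⟨hzC, _⟩, rfl⟩
    have h1 := hlow z (x k)
    have h2 := hlb z hzC
    have h3 : 0 ≤ (M - c) / K * ‖z - x k‖ ^ (p + 1) := by positivity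
    simp only
    linarith
  have hmem : sModel p F g h M (y (k + 1)) (x k) ∈
      (fun z => sModel p F g h M z (x k)) '' {z | z ∈ C ∧ ‖z - x k‖ ≤ D k} :=
    Set.mem_image_of_mem _ ⟨hyC k, hsD⟩
  have hinf_le : sInf ((fun z => sModel p F g h M z (x k)) '' {z | z ∈ C ∧ ‖z - x k‖ ≤ D k})
      ≤ sModel p F g h M (y (k + 1)) (x k) := csInf_le hbdd hmem
  -- inequality (A)
  have hA : f1 + (M - c) / K * r ^ (p + 1) ≤ f2 + (M + c) / K * s ^ (p + 1)
      + δ / K * r ^ (p + 1) := by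
    have h1 := hinx k
    rw [← hr] at h1
    have h2 := hhigh (y (k + 1)) (x k)
    rw [← hf2, ← hs] at h2
    have h3 := hlow (x (k + 1)) (x k)
    rw [← hf1, ← hr] at h3
    linarith
  -- inequality (B')
  have hB' : f2 + μ / K * s ^ (p + 1) ≤ f1 + μ / K * r ^ (p + 1) := by
    have := hy k (x (k + 1)) (hxC (k + 1))
    rw [← hf2, ← hf1, ← hs, ← hr] at this
    exact this
  -- s^{p+1} ≤ Lμ r^{p+1}
  have hC : s ^ (p + 1) ≤ Lμ * r ^ (p + 1) := by
    have h8 : (μ - (M + c)) / K * s ^ (p + 1) ≤ (μ + δ + c - M) / K * r ^ (p + 1) := by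
      have e1 : (μ - (M + c)) / K * s ^ (p + 1)
          = μ / K * s ^ (p + 1) - (M + c) / K * s ^ (p + 1) := by ring
      have e2 : (μ + δ + c - M) / K * r ^ (p + 1)
          = μ / K * r ^ (p + 1) + δ / K * r ^ (p + 1) - (M - c) / K * r ^ (p + 1) := by ring
      rw [e1, e2]
      linarith
    have h9 : (μ - (M + c)) * s ^ (p + 1) ≤ (μ + δ + c - M) * r ^ (p + 1) := by
      have h10 := mul_le_mul_of_nonneg_left h8 hK.le
      have e3 : K * ((μ - (M + c)) / K * s ^ (p + 1)) = (μ - (M + c)) * s ^ (p + 1) := by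
        field_simp
      have e4 : K * ((μ + δ + c - M) / K * r ^ (p + 1)) = (μ + δ + c - M) * r ^ (p + 1) := by
        field_simp
      rw [e3, e4] at h10
      exact h10
    rw [hLμ, div_mul_eq_mul_div, le_div_iff₀ hμc]
    linarith [h9]
  -- final assembly
  set α : ℝ := (p : ℝ) * q / ((p : ℝ) + 1) with hα
  have hα0 : 0 ≤ α := by positivity
  have hPf : (0 : ℝ) < (Nat.factorial p : ℝ) := by exact_mod_cast Nat.factorial_pos p
  -- T1 : first term bound
  have hT1 : σq * (μ / (Nat.factorial p : ℝ) * s ^ p) ^ q ≤ C₁ * (f0 - f1) ^ α := by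
    have hb1 : (0 : ℝ) ≤ μ / (Nat.factorial p : ℝ) := by positivity
    have e1 : (μ / (Nat.factorial p : ℝ) * s ^ p) ^ q
        = (μ / (Nat.factorial p : ℝ)) ^ q * (s ^ p) ^ q :=
      Real.mul_rpow hb1 (by positivity)
    have e2 : ((s : ℝ) ^ p) ^ q = (s ^ (p + 1)) ^ α := by
      rw [← Real.rpow_natCast s p, ← Real.rpow_natCast s (p + 1),
        ← Real.rpow_mul hs0, ← Real.rpow_mul hs0]
      congr 1
      rw [hα]
      push_cast
      field_simp
    have e3 : (s ^ (p + 1) : ℝ) ^ α ≤ (Lμ * (K * (f0 - f1) / (M - c))) ^ α := by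
      apply Real.rpow_le_rpow (by positivity)
      · calc (s : ℝ) ^ (p + 1) ≤ Lμ * r ^ (p + 1) := hC
          _ ≤ Lμ * (K * (f0 - f1) / (M - c)) := by
              apply mul_le_mul_of_nonneg_left hD1 hLμpos.le
      · exact hα0
    have e4 : (Lμ * (K * (f0 - f1) / (M - c))) ^ α
        = Lμ ^ α * (K / (M - c)) ^ α * (f0 - f1) ^ α := by
      rw [show Lμ * (K * (f0 - f1) / (M - c)) = Lμ * ((K / (M - c)) * (f0 - f1)) by ring,
        Real.mul_rpow hLμpos.le (by positivity),
        Real.mul_rpow (by positivity) hΔ0, mul_assoc]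
    calc σq * (μ / (Nat.factorial p : ℝ) * s ^ p) ^ q
        = σq * (μ / (Nat.factorial p : ℝ)) ^ q * (s ^ p) ^ q := by rw [e1]; ring
      _ = σq * (μ / (Nat.factorial p : ℝ)) ^ q * (s ^ (p + 1)) ^ α := by rw [e2]
      _ ≤ σq * (μ / (Nat.factorial p : ℝ)) ^ q * (Lμ * (K * (f0 - f1) / (M - c))) ^ α := by
          apply mul_le_mul_of_nonneg_left e3 (by positivity)
      _ = C₁ * (f0 - f1) ^ α := by
          rw [e4, hC₁]; ring
  -- T2 : second term bound
  have hT2 : (M + c) / K * (Lμ * r ^ (p + 1)) + (δ + c - M) / K * r ^ (p + 1)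
      ≤ C₂ * (f0 - f1) := by
    have hcoef : 0 ≤ (M + c) * Lμ + δ + c - M := by nlinarith [hLμ1, hMC2]
    have e1 : (M + c) / K * (Lμ * r ^ (p + 1)) + (δ + c - M) / K * r ^ (p + 1)
        = ((M + c) * Lμ + δ + c - M) / K * r ^ (p + 1) := by ring
    rw [e1]
    calc ((M + c) * Lμ + δ + c - M) / K * r ^ (p + 1)
        ≤ ((M + c) * Lμ + δ + c - M) / K * (K * (f0 - f1) / (M - c)) := by
          apply mul_le_mul_of_nonneg_left hD1 (by positivity)
      _ = C₂ * (f0 - f1) := by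
          rw [hC₂]
          field_simp
  -- base inequality
  have hbase : f1 - fstar2 ≤ σq * (μ / (Nat.factorial p : ℝ) * s ^ p) ^ q
      + (M + c) / K * (Lμ * r ^ (p + 1)) + (δ + c - M) / K * r ^ (p + 1) := by
    have h1 := hKL k
    rw [← hf2, ← hs] at h1
    have h2 : (M + c) / K * s ^ (p + 1) ≤ (M + c) / K * (Lμ * r ^ (p + 1)) := by
      apply mul_le_mul_of_nonneg_left hC (by positivity)
    have e1 : (δ + c - M) / K * r ^ (p + 1)
        = δ / K * r ^ (p + 1) + c / K * r ^ (p + 1) - M / K * r ^ (p + 1) := by ring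
    have e2 : (M - c) / K * r ^ (p + 1)
        = M / K * r ^ (p + 1) - c / K * r ^ (p + 1) := by ring
    linarith
  calc f1 - fstar2 ≤ σq * (μ / (Nat.factorial p : ℝ) * s ^ p) ^ q
      + (M + c) / K * (Lμ * r ^ (p + 1)) + (δ + c - M) / K * r ^ (p + 1) := hbase
    _ ≤ C₁ * (f0 - f1) ^ α + C₂ * (f0 - f1) := by linarith

end
end
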